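/- If S is sectorially dichotomous with angle θ on a Hilbert space, then its adjoint S* is also sectorially dichotomous with angle θ. -/

import Mathlib

/-- `Rz` is a (bounded, everywhere defined) resolvent operator for `S` at `z`. -/
def HasRes {V : Type*} [NormedAddCommGroup V] [NormedSpace ℂ V]
    (S : V →ₗ.[ℂ] V) (z : ℂ) (Rz : V →L[ℂ] V) : Prop :=
  (∀ y : V, ∃ h : Rz y ∈ S.domain, S ⟨Rz y, h⟩ - z • Rz y = y) ∧
  (∀ x : S.domain, Rz (S x - z • (x : V)) = (x : V))

/-- `Rz` is a resolvent operator at `z` for the restriction of `S` to the invariant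
subspace `W`. -/
def HasResOn {V : Type*} [NormedAddCommGroup V] [NormedSpace ℂ V]
    (S : V →ₗ.[ℂ] V) (W : Submodule ℂ V) (z : ℂ) (Rz : ↥W →L[ℂ] ↥W) : Prop :=
  (∀ y : W, ∃ h : ((Rz y : V) ∈ S.domain), S ⟨(Rz y : V), h⟩ - z • (Rz y : V) = (y : V)) ∧
  (∀ x : S.domain, ((x : V) ∈ W) →
    ∃ h : S x - z • (x : V) ∈ W, ((Rz ⟨S x - z • (x : V), h⟩ : V) = (x : V)))

section Helpers

open ComplexConjugate ContinuousLinearMap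

local notation "⟪" x ", " y "⟫" => @inner ℂ _ _ x y

variable {H : Type*} [NormedAddCommGroup H] [InnerProductSpace ℂ H] [CompleteSpace H]

theorem hasRes_adjoint {S : H →ₗ.[ℂ] H} (hdense : Dense (S.domain : Set H))
    (z : ℂ) (Rz : H →L[ℂ] H) (hR : HasRes S (conj z) Rz) :
    HasRes S.adjoint z (ContinuousLinearMap.adjoint Rz) := by
  set A' := ContinuousLinearMap.adjoint Rz with hA'
  have hb : ∀ x : S.domain, Rz (S x) = ↑x + conj z • Rz ↑x := by
    intro x
    have h2 := hR.2 x
    rw [map_sub, map_smul, sub_eq_iff_eq_add] at h2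
    rw [h2]
  have hkey : ∀ (y : H) (x : S.domain), ⟪y + z • A' y, (x : H)⟫ = ⟪A' y, S x⟫ := by
    intro y x
    rw [adjoint_inner_left, hb x, inner_add_left, inner_smul_left, adjoint_inner_left,
      inner_add_right, inner_smul_right]
  have hd : ∀ y : H, A' y ∈ S.adjoint.domain := fun y =>
    LinearPMap.mem_adjoint_domain_of_exists _ ⟨y + z • A' y, hkey y⟩
  have he : ∀ y : H, S.adjoint ⟨A' y, hd y⟩ = y + z • A' y := fun y =>
    LinearPMap.adjoint_apply_eq hdense _ (hkey y)
  constructor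
  · intro y
    exact ⟨hd y, by rw [he y]; exact add_sub_cancel_right _ _⟩
  · intro u
    apply ext_inner_right ℂ
    intro v
    rw [adjoint_inner_left, inner_sub_left, inner_smul_left]
    obtain ⟨hm, hev⟩ := hR.1 v
    have hSRv : S ⟨Rz v, hm⟩ = v + conj z • Rz v := by
      rw [sub_eq_iff_eq_add] at hev; rw [hev]
    have hfa : ⟪S.adjoint u, Rz v⟫ = ⟪(u : H), S ⟨Rz v, hm⟩⟫ :=
      LinearPMap.adjoint_isFormalAdjoint hdense u ⟨Rz v, hm⟩
    rw [hfa, hSRv, inner_add_right, inner_smul_right]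
    ring

theorem adjoint_inv {S : H →ₗ.[ℂ] H} (hdense : Dense (S.domain : Set H))
    (Wc : Submodule ℂ H) (Qd : H →L[ℂ] H)
    (hQdom : ∀ x : S.domain, Qd ↑x ∈ S.domain)
    (hQWc : ∀ x : S.domain, Qd ↑x ∈ Wc)
    (hfix : ∀ m ∈ Wc, Qd m = m)
    (hinvWc : ∀ x : S.domain, (x : H) ∈ Wc → S x ∈ Wc) :
    ∀ u : S.adjoint.domain, ((u : H) ∈ Wcᗮ) → S.adjoint u ∈ Wcᗮ := by
  intro u hu
  rw [Submodule.mem_orthogonal]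
  intro m hm
  have horth : ∀ w ∈ Wc, ⟪(u : H), w⟫ = 0 := by
    intro w hw
    rw [Submodule.mem_orthogonal] at hu
    rw [← inner_conj_symm, hu w hw, map_zero]
  have hclosed : IsClosed {v : H | ⟪S.adjoint u, v⟫ = 0} :=
    isClosed_eq (innerSL ℂ (S.adjoint u)).continuous continuous_const
  have hsub : (fun v => Qd v) '' (S.domain : Set H) ⊆ {v : H | ⟪S.adjoint u, v⟫ = 0} := by
    rintro - ⟨x, hx, rfl⟩
    have hfa : ⟪S.adjoint u, Qd x⟫ = ⟪(u : H), S ⟨Qd x, hQdom ⟨x, hx⟩⟩⟫ :=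
      LinearPMap.adjoint_isFormalAdjoint hdense u ⟨Qd x, hQdom ⟨x, hx⟩⟩
    have : S ⟨Qd x, hQdom ⟨x, hx⟩⟩ ∈ Wc := hinvWc _ (hQWc ⟨x, hx⟩)
    simpa [hfa] using horth _ this
  have hmem : m ∈ closure ((fun v => Qd v) '' (S.domain : Set H)) := by
    have := map_mem_closure Qd.continuous (hdense m) (Set.mapsTo_image _ _)
    rwa [hfix m hm] at this
  have h0 : ⟪S.adjoint u, m⟫ = 0 := (hclosed.closure_subset_iff.2 hsub) hmem
  rw [← inner_conj_symm, h0, map_zero]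

theorem hasResOn_adjoint {S : H →ₗ.[ℂ] H} (hdense : Dense (S.domain : Set H))
    {W Wc : Submodule ℂ H}
    (P : H →L[ℂ] W)
    (hPkill : ∀ v : H, v ∈ Wc → P v = 0)
    (hdiff : ∀ v : H, v - (P v : H) ∈ Wc)
    (hcomm : ∀ x : S.domain, ∃ hx : ((P ↑x : H) ∈ S.domain),
      S ⟨(P ↑x : H), hx⟩ = (P (S x) : H))
    (hSadj : ∀ u : S.adjoint.domain, ((u : H) ∈ Wcᗮ) → S.adjoint u ∈ Wcᗮ)
    (z : ℂ) (Rz : ↥W →L[ℂ] ↥W) (hR : HasResOn S W (conj z) Rz) :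
    ∃ R' : ↥Wcᗮ →L[ℂ] ↥Wcᗮ, HasResOn S.adjoint Wcᗮ z R' ∧ ‖R'‖ ≤ ‖Rz‖ * ‖P‖ := by
  set A : H →L[ℂ] H := W.subtypeL ∘L (Rz ∘L P) with hAdef
  have hAv : ∀ v : H, A v = ↑(Rz (P v)) := fun v => rfl
  have ha : ∀ v : H, ∃ hm : A v ∈ S.domain, S ⟨A v, hm⟩ = ↑(P v) + conj z • A v := by
    intro v
    obtain ⟨hm, he⟩ := hR.1 (P v)
    rw [sub_eq_iff_eq_add] at he
    exact ⟨hm, he⟩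
  have hb : ∀ x : S.domain, A (S x) = ↑(P ↑x) + conj z • A ↑x := by
    intro x
    obtain ⟨hx, hSx⟩ := hcomm x
    set x' : S.domain := ⟨↑(P ↑x), hx⟩ with hx'def
    obtain ⟨hmem, heq⟩ := hR.2 x' (P (↑x : H)).2
    have hdecomp : P (S x) = ⟨S x' - conj z • (x' : H), hmem⟩ + conj z • P ↑x := by
      apply Subtype.ext
      simp only [Submodule.coe_add, SetLike.val_smul]
      rw [hSx]
      simp [hx'def]
    rw [hAv, hdecomp, map_add, map_smul]
    push_cast
    rw [heq]
    simp [hx'def, hAv]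
  set A' := ContinuousLinearMap.adjoint A with hA'def
  have hu_inner : ∀ u : H, u ∈ Wcᗮ → ∀ v : H, ⟪u, ((P v : H) : H)⟫ = ⟪u, v⟫ := by
    intro u hu v
    have h0 : ⟪u, v - ↑(P v)⟫ = 0 := by
      rw [Submodule.mem_orthogonal] at hu
      rw [← inner_conj_symm, hu _ (hdiff v), map_zero]
    rw [inner_sub_right] at h0
    linear_combination -h0
  have hc : ∀ y : H, A' y ∈ Wcᗮ := by
    intro y
    rw [Submodule.mem_orthogonal]
    intro m hm
    rw [← inner_conj_symm, adjoint_inner_left, hAv, hPkill m hm]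
    simp
  have hkey : ∀ y : H, y ∈ Wcᗮ → ∀ x : S.domain,
      ⟪y + z • A' y, (x : H)⟫ = ⟪A' y, S x⟫ := by
    intro y hy x
    rw [adjoint_inner_left, hb x, inner_add_right, inner_smul_right,
      inner_add_left, inner_smul_left, hu_inner y hy ↑x, ← adjoint_inner_left A]
  have hd : ∀ y : H, y ∈ Wcᗮ → A' y ∈ S.adjoint.domain := fun y hy =>
    LinearPMap.mem_adjoint_domain_of_exists _ ⟨y + z • A' y, hkey y hy⟩
  have he : ∀ (y : H) (hy : y ∈ Wcᗮ), S.adjoint ⟨A' y, hd y hy⟩ = y + z • A' y := fun y hy =>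
    LinearPMap.adjoint_apply_eq hdense _ (hkey y hy)
  refine ⟨(A' ∘L Wcᗮ.subtypeL).codRestrict Wcᗮ (fun y => hc ↑y), ⟨?_, ?_⟩, ?_⟩
  · intro y
    refine ⟨hd ↑y y.2, ?_⟩
    show S.adjoint ⟨A' ↑y, hd ↑y y.2⟩ - z • (A' ↑y) = (y : H)
    rw [he ↑y y.2]
    exact add_sub_cancel_right _ _
  · intro u hu
    have hmem : S.adjoint u - z • (u : H) ∈ Wcᗮ :=
      sub_mem (hSadj u hu) (Submodule.smul_mem _ _ hu)
    refine ⟨hmem, ?_⟩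
    show A' (S.adjoint u - z • (u : H)) = (u : H)
    apply ext_inner_right ℂ
    intro v
    rw [adjoint_inner_left, inner_sub_left, inner_smul_left]
    obtain ⟨hm, hSAv⟩ := ha v
    have hfa : ⟪S.adjoint u, A v⟫ = ⟪(u : H), S ⟨A v, hm⟩⟫ :=
      LinearPMap.adjoint_isFormalAdjoint hdense u ⟨A v, hm⟩
    rw [hfa, hSAv, inner_add_right, inner_smul_right, hu_inner ↑u hu v,
      ← adjoint_inner_left A]
    ring
  · have hAb : ∀ v : H, ‖A v‖ ≤ ‖Rz‖ * ‖P‖ * ‖v‖ := by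
      intro v
      rw [hAv]
      calc ‖(↑(Rz (P v)) : H)‖ = ‖Rz (P v)‖ := rfl
        _ ≤ ‖Rz‖ * ‖P v‖ := Rz.le_opNorm _
        _ ≤ ‖Rz‖ * (‖P‖ * ‖v‖) :=
            mul_le_mul_of_nonneg_left (P.le_opNorm v) (by positivity)
        _ = ‖Rz‖ * ‖P‖ * ‖v‖ := by ring
    have hAnorm : ‖A‖ ≤ ‖Rz‖ * ‖P‖ := A.opNorm_le_bound (by positivity) hAb
    have h2 : ‖A'‖ = ‖A‖ := by
      rw [hA'def]
      exact (ContinuousLinearMap.adjoint : (H →L[ℂ] H) ≃ₗᵢ⋆[ℂ] (H →L[ℂ] H)).norm_map A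
    have hRb : ∀ y : ↥Wcᗮ,
        ‖((A' ∘L Wcᗮ.subtypeL).codRestrict Wcᗮ (fun y => hc ↑y)) y‖ ≤ ‖Rz‖ * ‖P‖ * ‖y‖ := by
      intro y
      have h1 : ‖((A' ∘L Wcᗮ.subtypeL).codRestrict Wcᗮ (fun y => hc ↑y)) y‖ = ‖A' ↑y‖ := rfl
      rw [h1]
      calc ‖A' ↑y‖ ≤ ‖A'‖ * ‖(y : H)‖ := A'.le_opNorm _
        _ ≤ ‖Rz‖ * ‖P‖ * ‖(y : H)‖ := by
            rw [h2]; exact mul_le_mul_of_nonneg_right hAnorm (by positivity)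
        _ = ‖Rz‖ * ‖P‖ * ‖y‖ := rfl
    exact ContinuousLinearMap.opNorm_le_bound _ (by positivity) hRb

end Helpers

/-- if `S` is sectorially dichotomous with angle `θ` on a Hilbert space
(with decomposition `H = H₊ ⊕ H₋`), then `S*` is sectorially dichotomous with angle
`θ` with respect to `H = H₋ᗮ ⊕ H₊ᗮ`. -/
theorem adjoint_sectoriallyDichotomous
    {H : Type*} [NormedAddCommGroup H] [InnerProductSpace ℂ H] [CompleteSpace H]
    (S : H →ₗ.[ℂ] H) (hdense : Dense (S.domain : Set H))
    (hclosed : IsClosed (S.graph : Set (H × H)))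
    (θ : ℝ) (hθ0 : 0 ≤ θ) (hθ : θ < Real.pi / 2)
    (h : ℝ) (hh : 0 < h)
    (Hp Hm : Submodule ℂ H) (hHp : IsClosed (Hp : Set H)) (hHm : IsClosed (Hm : Set H))
    (hcompl : IsCompl Hp Hm)
    (hstrip : ∀ z : ℂ, |z.re| < h → ∃ Rz : H →L[ℂ] H, HasRes S z Rz)
    (hinvp : ∀ x : S.domain, (x : H) ∈ Hp → S x ∈ Hp)
    (hinvm : ∀ x : S.domain, (x : H) ∈ Hm → S x ∈ Hm)
    (hspecp : ∀ z : ℂ, z.re ≤ 0 → ∃ Rz : ↥Hp →L[ℂ] ↥Hp, HasResOn S Hp z Rz)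
    (hspecm : ∀ z : ℂ, 0 ≤ z.re → ∃ Rz : ↥Hm →L[ℂ] ↥Hm, HasResOn S Hm z Rz)
    (hsectp : ∀ θ' : ℝ, θ < θ' → θ' ≤ Real.pi → ∃ M > (0 : ℝ), ∀ z : ℂ,
      θ' ≤ |z.arg| → ∃ Rz : ↥Hp →L[ℂ] ↥Hp, HasResOn S Hp z Rz ∧ ‖Rz‖ ≤ M / ‖z‖)
    (hsectm : ∀ θ' : ℝ, θ < θ' → θ' ≤ Real.pi → ∃ M > (0 : ℝ), ∀ z : ℂ,
      θ' ≤ |z.arg| → ∃ Rz : ↥Hm →L[ℂ] ↥Hm, HasResOn S Hm (-z) Rz ∧ ‖Rz‖ ≤ M / ‖z‖) :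
    -- S* is sectorially dichotomous with angle θ w.r.t. H = H₋ᗮ ⊕ H₊ᗮ
    IsCompl Hmᗮ Hpᗮ ∧
    (∃ h' > (0 : ℝ), ∀ z : ℂ, |z.re| < h' →
      ∃ Rz : H →L[ℂ] H, HasRes S.adjoint z Rz) ∧
    (∀ y : S.adjoint.domain, (y : H) ∈ Hmᗮ → S.adjoint y ∈ Hmᗮ) ∧
    (∀ y : S.adjoint.domain, (y : H) ∈ Hpᗮ → S.adjoint y ∈ Hpᗮ) ∧
    (∀ z : ℂ, z.re ≤ 0 → ∃ Rz : ↥Hmᗮ →L[ℂ] ↥Hmᗮ, HasResOn S.adjoint Hmᗮ z Rz) ∧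
    (∀ z : ℂ, 0 ≤ z.re → ∃ Rz : ↥Hpᗮ →L[ℂ] ↥Hpᗮ, HasResOn S.adjoint Hpᗮ z Rz) ∧
    (∀ θ' : ℝ, θ < θ' → θ' ≤ Real.pi → ∃ M > (0 : ℝ), ∀ z : ℂ,
      θ' ≤ |z.arg| →
        ∃ Rz : ↥Hmᗮ →L[ℂ] ↥Hmᗮ, HasResOn S.adjoint Hmᗮ z Rz ∧ ‖Rz‖ ≤ M / ‖z‖) ∧
    (∀ θ' : ℝ, θ < θ' → θ' ≤ Real.pi → ∃ M > (0 : ℝ), ∀ z : ℂ,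
      θ' ≤ |z.arg| →
        ∃ Rz : ↥Hpᗮ →L[ℂ] ↥Hpᗮ, HasResOn S.adjoint Hpᗮ (-z) Rz ∧ ‖Rz‖ ≤ M / ‖z‖) := by
  -- the continuous projections onto Hp along Hm and onto Hm along Hp
  set Pc : H →L[ℂ] ↥Hp := Hp.linearProjOfClosedCompl Hm hcompl hHp hHm with hPcdef
  set Qc : H →L[ℂ] ↥Hm := Hm.linearProjOfClosedCompl Hp hcompl.symm hHm hHp with hQcdef
  have hPfix : ∀ w : ↥Hp, Pc ↑w = w := fun w =>
    Submodule.linearProjOfIsCompl_apply_left hcompl w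
  have hPkill : ∀ v ∈ Hm, Pc v = 0 := fun v hv =>
    Submodule.linearProjOfIsCompl_apply_right' hcompl hv
  have hQfix : ∀ w : ↥Hm, Qc ↑w = w := fun w =>
    Submodule.linearProjOfIsCompl_apply_left hcompl.symm w
  have hQkill : ∀ v ∈ Hp, Qc v = 0 := fun v hv =>
    Submodule.linearProjOfIsCompl_apply_right' hcompl.symm hv
  have hPQ : ∀ v : H, (↑(Pc v) : H) + ↑(Qc v) = v := fun v =>
    Submodule.projection_add_projection_eq_self hcompl v
  have hdiffP : ∀ v : H, v - (↑(Pc v) : H) ∈ Hm := by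
    intro v
    have hv : (↑(Qc v) : H) = v - ↑(Pc v) := eq_sub_of_add_eq' (hPQ v)
    exact hv ▸ (Qc v).2
  have hdiffQ : ∀ v : H, v - (↑(Qc v) : H) ∈ Hp := by
    intro v
    have hv : (↑(Pc v) : H) = v - ↑(Qc v) := eq_sub_of_add_eq (hPQ v)
    exact hv ▸ (Pc v).2
  -- resolvents at 0
  obtain ⟨R0, hR0⟩ := hstrip 0 (by simpa using hh)
  obtain ⟨Rp0, hRp0⟩ := hspecp 0 le_rfl
  obtain ⟨Rm0, hRm0⟩ := hspecm 0 le_rfl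
  have hR0x : ∀ x : S.domain, R0 (S x) = ↑x := by
    intro x
    have h2 := hR0.2 x
    simpa using h2
  -- decomposition of domain elements
  have hdec : ∀ x : S.domain, (↑x : H) = ↑(Rp0 (Pc (S x))) + ↑(Rm0 (Qc (S x))) := by
    intro x
    obtain ⟨ha1, ha2⟩ := hRp0.1 (Pc (S x))
    obtain ⟨hb1, hb2⟩ := hRm0.1 (Qc (S x))
    simp only [zero_smul, sub_zero] at ha2 hb2
    have hu : (↑(Rp0 (Pc (S x))) : H) + ↑(Rm0 (Qc (S x))) ∈ S.domain :=
      S.domain.add_mem ha1 hb1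
    have hSu : S ⟨(↑(Rp0 (Pc (S x))) : H) + ↑(Rm0 (Qc (S x))), hu⟩ = S x := by
      have heq : (⟨(↑(Rp0 (Pc (S x))) : H) + ↑(Rm0 (Qc (S x))), hu⟩ : S.domain)
          = ⟨↑(Rp0 (Pc (S x))), ha1⟩ + ⟨↑(Rm0 (Qc (S x))), hb1⟩ := rfl
      rw [heq, S.map_add, ha2, hb2, hPQ]
    have h1 := hR0.2 ⟨(↑(Rp0 (Pc (S x))) : H) + ↑(Rm0 (Qc (S x))), hu⟩
    simp only [zero_smul, sub_zero] at h1
    rw [hSu, hR0x x] at h1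
    exact h1
  -- the projections commute with S
  have hcommP : ∀ x : S.domain, ∃ hx : ((↑(Pc ↑x) : H) ∈ S.domain),
      S ⟨(↑(Pc ↑x) : H), hx⟩ = (↑(Pc (S x)) : H) := by
    intro x
    obtain ⟨ha1, ha2⟩ := hRp0.1 (Pc (S x))
    simp only [zero_smul, sub_zero] at ha2
    have hPx : Pc ↑x = Rp0 (Pc (S x)) := by
      rw [hdec x, map_add, hPfix, hPkill _ (Rm0 (Qc (S x))).2, add_zero]
    have hPx' : (↑(Pc ↑x) : H) = ↑(Rp0 (Pc (S x))) := congrArg _ hPx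
    have hx' : (↑(Pc ↑x) : H) ∈ S.domain := by rw [hPx']; exact ha1
    refine ⟨hx', ?_⟩
    have heqd : (⟨(↑(Pc ↑x) : H), hx'⟩ : S.domain) = ⟨↑(Rp0 (Pc (S x))), ha1⟩ :=
      Subtype.ext hPx'
    rw [heqd, ha2]
  have hcommQ : ∀ x : S.domain, ∃ hx : ((↑(Qc ↑x) : H) ∈ S.domain),
      S ⟨(↑(Qc ↑x) : H), hx⟩ = (↑(Qc (S x)) : H) := by
    intro x
    obtain ⟨hb1, hb2⟩ := hRm0.1 (Qc (S x))
    simp only [zero_smul, sub_zero] at hb2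
    have hQx : Qc ↑x = Rm0 (Qc (S x)) := by
      rw [hdec x, map_add, hQfix, hQkill _ (Rp0 (Pc (S x))).2, zero_add]
    have hQx' : (↑(Qc ↑x) : H) = ↑(Rm0 (Qc (S x))) := congrArg _ hQx
    have hx' : (↑(Qc ↑x) : H) ∈ S.domain := by rw [hQx']; exact hb1
    refine ⟨hx', ?_⟩
    have heqd : (⟨(↑(Qc ↑x) : H), hx'⟩ : S.domain) = ⟨↑(Rm0 (Qc (S x))), hb1⟩ :=
      Subtype.ext hQx'
    rw [heqd, hb2]
  -- invariance of the orthogonal complements under the adjoint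
  have hinvm' : ∀ u : S.adjoint.domain, ((u : H) ∈ Hmᗮ) → S.adjoint u ∈ Hmᗮ := by
    apply adjoint_inv hdense Hm (ContinuousLinearMap.id ℂ H - Hp.subtypeL ∘L Pc)
    · intro x
      show (↑x : H) - ↑(Pc ↑x) ∈ S.domain
      exact S.domain.sub_mem x.2 (hcommP x).choose
    · intro x
      show (↑x : H) - ↑(Pc ↑x) ∈ Hm
      exact hdiffP ↑x
    · intro m hm
      show m - (↑(Pc m) : H) = m
      rw [hPkill m hm]
      simp
    · exact hinvm
  have hinvp' : ∀ u : S.adjoint.domain, ((u : H) ∈ Hpᗮ) → S.adjoint u ∈ Hpᗮ := by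
    apply adjoint_inv hdense Hp (ContinuousLinearMap.id ℂ H - Hm.subtypeL ∘L Qc)
    · intro x
      show (↑x : H) - ↑(Qc ↑x) ∈ S.domain
      exact S.domain.sub_mem x.2 (hcommQ x).choose
    · intro x
      show (↑x : H) - ↑(Qc ↑x) ∈ Hp
      exact hdiffQ ↑x
    · intro m hm
      show m - (↑(Qc m) : H) = m
      rw [hQkill m hm]
      simp
    · exact hinvp
  refine ⟨?_, ?_, hinvm', hinvp', ?_, ?_, ?_, ?_⟩
  · -- IsCompl Hmᗮ Hpᗮ
    constructor
    · rw [disjoint_iff, Submodule.inf_orthogonal, sup_comm, hcompl.sup_eq_top,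
        Submodule.top_orthogonal_eq_bot]
    · rw [codisjoint_iff, eq_top_iff]
      intro u _
      set Pf : H →L[ℂ] H := Hp.subtypeL ∘L Pc with hPfdef
      set u1 := ContinuousLinearMap.adjoint Pf u with hu1def
      have h1 : u1 ∈ Hmᗮ := by
        rw [Submodule.mem_orthogonal]
        intro m hm
        have hPfm : Pf m = 0 := by
          show (↑(Pc m) : H) = 0
          rw [hPkill m hm]
          rfl
        rw [← inner_conj_symm, hu1def, ContinuousLinearMap.adjoint_inner_left, hPfm, inner_zero_right, map_zero]
      have h2 : u - u1 ∈ Hpᗮ := by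
        rw [Submodule.mem_orthogonal']
        intro p hp
        have hPp : Pc p = ⟨p, hp⟩ := hPfix ⟨p, hp⟩
        have hPfp : Pf p = p := by
          show (↑(Pc p) : H) = p
          rw [hPp]
        rw [inner_sub_left, hu1def, ContinuousLinearMap.adjoint_inner_left, hPfp, sub_self]
      exact Submodule.mem_sup.2 ⟨u1, h1, u - u1, h2, by abel⟩
  · -- the strip for the adjoint
    refine ⟨h, hh, fun z hz => ?_⟩
    obtain ⟨Rz, hRz⟩ := hstrip ((starRingEnd ℂ) z) (by rwa [Complex.conj_re])
    exact ⟨ContinuousLinearMap.adjoint Rz, hasRes_adjoint hdense z Rz hRz⟩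
  · -- left half-plane resolvents on Hmᗮ
    intro z hz
    obtain ⟨Rz, hRz⟩ := hspecp ((starRingEnd ℂ) z) (by rwa [Complex.conj_re])
    obtain ⟨R', hR', -⟩ := hasResOn_adjoint hdense Pc hPkill hdiffP hcommP hinvm' z Rz hRz
    exact ⟨R', hR'⟩
  · -- right half-plane resolvents on Hpᗮ
    intro z hz
    obtain ⟨Rz, hRz⟩ := hspecm ((starRingEnd ℂ) z) (by rwa [Complex.conj_re])
    obtain ⟨R', hR', -⟩ := hasResOn_adjoint hdense Qc hQkill hdiffQ hcommQ hinvp' z Rz hRz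
    exact ⟨R', hR'⟩
  · -- sectoriality on Hmᗮ
    intro θ' hθ'1 hθ'2
    obtain ⟨M, hM0, hM⟩ := hsectp θ' hθ'1 hθ'2
    refine ⟨M * (‖Pc‖ + 1), by positivity, ?_⟩
    intro z hargz
    have hz0 : z ≠ 0 := by
      rintro rfl
      rw [Complex.arg_zero, abs_zero] at hargz
      linarith
    have hzpos : 0 < ‖z‖ := norm_pos_iff.2 hz0
    have harg : θ' ≤ |((starRingEnd ℂ) z).arg| := by
      rw [Complex.arg_conj]
      split_ifs with hπ
      · rw [hπ] at hargz
        exact hargz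
      · rwa [abs_neg]
    obtain ⟨Rz, hRz, hRzn⟩ := hM ((starRingEnd ℂ) z) harg
    obtain ⟨R', hR', hn⟩ := hasResOn_adjoint hdense Pc hPkill hdiffP hcommP hinvm' z Rz hRz
    refine ⟨R', hR', ?_⟩
    rw [RCLike.norm_conj] at hRzn
    calc ‖R'‖ ≤ ‖Rz‖ * ‖Pc‖ := hn
      _ ≤ (M / ‖z‖) * ‖Pc‖ := mul_le_mul_of_nonneg_right hRzn (by positivity)
      _ = (M * ‖Pc‖) / ‖z‖ := by ring
      _ ≤ (M * (‖Pc‖ + 1)) / ‖z‖ := by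
          gcongr
          linarith
  · -- sectoriality on Hpᗮ
    intro θ' hθ'1 hθ'2
    obtain ⟨M, hM0, hM⟩ := hsectm θ' hθ'1 hθ'2
    refine ⟨M * (‖Qc‖ + 1), by positivity, ?_⟩
    intro z hargz
    have hz0 : z ≠ 0 := by
      rintro rfl
      rw [Complex.arg_zero, abs_zero] at hargz
      linarith
    have hzpos : 0 < ‖z‖ := norm_pos_iff.2 hz0
    have harg : θ' ≤ |((starRingEnd ℂ) z).arg| := by
      rw [Complex.arg_conj]
      split_ifs with hπ
      · rw [hπ] at hargz
        exact hargz
      · rwa [abs_neg]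
    obtain ⟨Rz, hRz, hRzn⟩ := hM ((starRingEnd ℂ) z) harg
    have hRz' : HasResOn S Hm ((starRingEnd ℂ) (-z)) Rz := by rwa [map_neg]
    obtain ⟨R', hR', hn⟩ :=
      hasResOn_adjoint hdense Qc hQkill hdiffQ hcommQ hinvp' (-z) Rz hRz'
    refine ⟨R', hR', ?_⟩
    rw [RCLike.norm_conj] at hRzn
    calc ‖R'‖ ≤ ‖Rz‖ * ‖Qc‖ := hn
      _ ≤ (M / ‖z‖) * ‖Qc‖ := mul_le_mul_of_nonneg_right hRzn (by positivity)
      _ = (M * ‖Qc‖) / ‖z‖ := by ring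
      _ ≤ (M * (‖Qc‖ + 1)) / ‖z‖ := by
          gcongr
          linarith
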